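/- Let H be a complex Hilbert space with dim H ≥ 2 and let T be a nonzero bounded linear operator on H with m(T) = 0 (i.e., T is not bounded from below). Then ε̂(T) = 1. -/

import Mathlib

open scoped ComplexInnerProductSpace

noncomputable section

variable {H : Type*} [NormedAddCommGroup H] [InnerProductSpace ℂ H] [CompleteSpace H]

/-- `T` is `ε`-approximately orthogonality preserving: orthogonal vectors are mapped to
`ε`-orthogonal vectors. -/
def IsAOP (T : H →L[ℂ] H) (ε : ℝ) : Prop :=
  ∀ x y : H, ⟪x, y⟫ = 0 → ‖⟪T x, T y⟫‖ ≤ ε * (‖T x‖ * ‖T y‖)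

/-- `ε̂(T)`, the smallest `ε ∈ [0,1]` for which `T` is `ε`-AOP. -/
def epsHat (T : H →L[ℂ] H) : ℝ :=
  sInf {ε : ℝ | 0 ≤ ε ∧ ε ≤ 1 ∧ IsAOP T ε}

/-- The minimum modulus `m(T) = inf {‖T x‖ : ‖x‖ = 1}`. -/
def minMod (T : H →L[ℂ] H) : ℝ :=
  sInf {r : ℝ | ∃ x : H, ‖x‖ = 1 ∧ ‖T x‖ = r}

/-- The set `ℂ𝒱` of scalar multiples of linear isometries of `H`. -/
def scalarIsoms (H : Type*) [NormedAddCommGroup H] [InnerProductSpace ℂ H] :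
    Set (H →L[ℂ] H) :=
  {S | ∃ (c : ℂ) (V : H →L[ℂ] H), (∀ x : H, ‖V x‖ = ‖x‖) ∧ S = c • V}

/-- `dist(T, ℂ𝒱)`. -/
def distCV (T : H →L[ℂ] H) : ℝ := Metric.infDist T (scalarIsoms H)

/-- The set `𝒱` of linear isometries of `H`. -/
def isoms (H : Type*) [NormedAddCommGroup H] [InnerProductSpace ℂ H] :
    Set (H →L[ℂ] H) :=
  {V | ∀ x : H, ‖V x‖ = ‖x‖}

/-- `dist(T, 𝒱)`. -/
def distV (T : H →L[ℂ] H) : ℝ := Metric.infDist T (isoms H)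

set_option maxHeartbeats 1000000 in
/-- If `T ≠ 0` is not bounded from below, then `ε̂(T) = 1`. -/
theorem epsHat_eq_one (hdim : 2 ≤ Module.rank ℂ H) (T : H →L[ℂ] H) (hT : T ≠ 0)
    (hm : minMod T = 0) : epsHat T = 1 := by
  have h1 : (1:ℝ) ∈ {ε : ℝ | 0 ≤ ε ∧ ε ≤ 1 ∧ IsAOP T ε} := by
    refine ⟨zero_le_one, le_refl 1, fun x y _ => ?_⟩
    rw [one_mul]
    exact norm_inner_le_norm _ _
  have hbdd : BddBelow {ε : ℝ | 0 ≤ ε ∧ ε ≤ 1 ∧ IsAOP T ε} := ⟨0, fun ε hε => hε.1⟩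
  obtain ⟨v, hv⟩ : ∃ v, T v ≠ 0 := by
    by_contra h; push_neg at h
    exact hT (ContinuousLinearMap.ext fun x => by simp [h x])
  have hv0 : v ≠ 0 := fun h => hv (by simp [h])
  set y₀ : H := ((‖v‖ : ℂ))⁻¹ • v with hy₀def
  have hy₀ : ‖y₀‖ = 1 := by
    simp [hy₀def, norm_smul, inv_mul_cancel₀ (norm_ne_zero_iff.2 hv0)]
  have hTy₀ : T y₀ ≠ 0 := by
    rw [hy₀def, map_smul]
    exact smul_ne_zero (by simpa using norm_ne_zero_iff.2 hv0) hv
  set c : ℝ := ‖T y₀‖ with hcdef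
  have hc : 0 < c := norm_pos_iff.2 hTy₀
  refine le_antisymm (csInf_le hbdd h1) (le_csInf ⟨1, h1⟩ ?_)
  rintro ε ⟨hε0, hε1, hAOP⟩
  by_contra hlt
  push_neg at hlt
  -- key lemma: for unit orthogonal x, y, (1-ε)‖Ty‖ ≤ (1+ε)‖Tx‖
  have key : ∀ x y : H, ‖x‖ = 1 → ‖y‖ = 1 → ⟪x, y⟫ = 0 →
      (1 - ε) * ‖T y‖ ≤ (1 + ε) * ‖T x‖ := by
    intro x y hx hy hxy
    have hyx : ⟪y, x⟫ = 0 := by rw [← inner_conj_symm, hxy, map_zero]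
    have huv : ⟪x + y, x - y⟫ = (0:ℂ) := by
      simp only [inner_add_left, inner_sub_right, hxy, hyx, inner_self_eq_norm_sq_to_K, hx, hy]
      ring
    have h2 := hAOP _ _ huv
    set a : ℝ := ‖T x‖ with hadef
    set b : ℝ := ‖T y‖ with hbdef
    have ha : 0 ≤ a := norm_nonneg _
    have hb : 0 ≤ b := norm_nonneg _
    have hsymm : (⟪T y, T x⟫).re = (⟪T x, T y⟫).re := by
      rw [← inner_conj_symm (T x) (T y)]; exact Complex.conj_re _
    have hre : (⟪T (x + y), T (x - y)⟫).re = a ^ 2 - b ^ 2 := by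
      simp only [map_add, map_sub, inner_add_left, inner_sub_right,
        inner_self_eq_norm_sq_to_K, Complex.add_re, Complex.sub_re, hsymm,
        show @RCLike.ofReal ℂ _ = Complex.ofReal from rfl,
        ← Complex.ofReal_pow, Complex.ofReal_re]
      ring
    have habs : b ^ 2 - a ^ 2 ≤ ‖⟪T (x + y), T (x - y)⟫‖ := by
      have := Complex.abs_re_le_norm (⟪T (x + y), T (x - y)⟫)
      rw [hre] at this
      cases abs_cases (a ^ 2 - b ^ 2) with
      | inl h => nlinarith [this]
      | inr h => nlinarith [this]
    have hnu : ‖T (x + y)‖ ≤ a + b := by rw [map_add]; exact norm_add_le _ _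
    have hnv : ‖T (x - y)‖ ≤ a + b := by rw [map_sub]; exact norm_sub_le _ _
    have hprod : ε * (‖T (x + y)‖ * ‖T (x - y)‖) ≤ ε * ((a + b) * (a + b)) := by
      apply mul_le_mul_of_nonneg_left _ hε0
      exact mul_le_mul hnu hnv (norm_nonneg _) (by positivity)
    have hkey2 : b ^ 2 - a ^ 2 ≤ ε * ((a + b) * (a + b)) :=
      le_trans habs (le_trans h2 hprod)
    have e1 : (b - a) * (a + b) = b ^ 2 - a ^ 2 := by ring
    have e2 : (ε * (a + b)) * (a + b) = ε * ((a + b) * (a + b)) := by ring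
    have hfact : (b - a) * (a + b) ≤ (ε * (a + b)) * (a + b) := by
      rw [e1, e2]; exact hkey2
    rcases eq_or_lt_of_le (by positivity : (0:ℝ) ≤ a + b) with hab | hab
    · have ha0 : a = 0 := by linarith
      have hb0 : b = 0 := by linarith
      rw [ha0, hb0]; simp
    · have h7 : b - a ≤ ε * (a + b) := le_of_mul_le_mul_right hfact hab
      have h8 : ε * (a + b) = ε * a + ε * b := by ring
      rw [h8] at h7
      have g1 : (1 - ε) * b = b - ε * b := by ring
      have g2 : (1 + ε) * a = a + ε * a := by ring
      rw [g1, g2]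
      linarith
  -- now use minMod = 0
  set δ : ℝ := (1 - ε) * c / 5 with hδdef
  have hδpos : 0 < δ := by
    apply div_pos (mul_pos (by linarith) hc) (by norm_num)
  have hne : {r : ℝ | ∃ x : H, ‖x‖ = 1 ∧ ‖T x‖ = r}.Nonempty := ⟨‖T y₀‖, y₀, hy₀, rfl⟩
  have hinf : sInf {r : ℝ | ∃ x : H, ‖x‖ = 1 ∧ ‖T x‖ = r} < δ := by
    have h5 : minMod T < δ := by rw [hm]; exact hδpos
    unfold minMod at h5
    exact h5
  obtain ⟨r, ⟨x, hx1, hTx⟩, hrδ⟩ := exists_lt_of_csInf_lt hne hinf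
  rw [← hTx] at hrδ
  -- decompose y₀ = ⟪x,y₀⟫ • x + z with z ⊥ x
  set z : H := y₀ - ⟪x, y₀⟫ • x with hzdef
  have hxz : ⟪x, z⟫ = (0:ℂ) := by
    simp [hzdef, inner_sub_right, inner_smul_right, inner_self_eq_norm_sq_to_K, hx1]
  have hiner : ‖⟪x, y₀⟫‖ ≤ 1 := by
    have := norm_inner_le_norm (𝕜 := ℂ) x y₀
    rwa [hx1, hy₀, one_mul] at this
  have hz2 : ‖z‖ ≤ 2 := by
    have h1' : ‖(⟪x, y₀⟫ : ℂ) • x‖ ≤ 1 := by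
      rw [norm_smul, hx1, mul_one]; exact hiner
    calc ‖z‖ ≤ ‖y₀‖ + ‖(⟪x, y₀⟫ : ℂ) • x‖ := norm_sub_le _ _
    _ ≤ 1 + 1 := by rw [hy₀]; linarith
    _ = 2 := by norm_num
  have hy₀eq : y₀ = ⟪x, y₀⟫ • x + z := by rw [hzdef]; abel
  have hTy₀le : c ≤ ‖T x‖ + ‖T z‖ := by
    calc c = ‖T (⟪x, y₀⟫ • x + z)‖ := by rw [hcdef, ← hy₀eq]
    _ ≤ ‖T (⟪x, y₀⟫ • x)‖ + ‖T z‖ := by rw [map_add]; exact norm_add_le _ _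
    _ ≤ ‖T x‖ + ‖T z‖ := by
        rw [map_smul, norm_smul]
        have : ‖⟪x, y₀⟫‖ * ‖T x‖ ≤ 1 * ‖T x‖ :=
          mul_le_mul_of_nonneg_right hiner (norm_nonneg _)
        linarith [this]
  have hTzle : (1 - ε) * ‖T z‖ ≤ 4 * ‖T x‖ := by
    rcases eq_or_ne z 0 with hz0 | hz0
    · simp [hz0]
    · have hzn : (0:ℝ) < ‖z‖ := norm_pos_iff.2 hz0
      have hzu : ‖(‖z‖⁻¹ : ℂ) • z‖ = 1 := by
        rw [norm_smul]
        simp [inv_mul_cancel₀ hzn.ne']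
      have hxzu : ⟪x, (‖z‖⁻¹ : ℂ) • z⟫ = (0:ℂ) := by
        rw [inner_smul_right, hxz, mul_zero]
      have := key x ((‖z‖⁻¹ : ℂ) • z) hx1 hzu hxzu
      rw [map_smul, norm_smul] at this
      have hn : ‖(‖z‖⁻¹ : ℂ)‖ = ‖z‖⁻¹ := by
        simp [abs_of_pos (inv_pos.2 hzn)]
      rw [hn] at this
      -- (1-ε) * (‖z‖⁻¹ * ‖Tz‖) ≤ (1+ε) * ‖Tx‖
      have h3 : (1 - ε) * ‖T z‖ ≤ (1 + ε) * ‖T x‖ * ‖z‖ := by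
        have := mul_le_mul_of_nonneg_right this hzn.le
        calc (1 - ε) * ‖T z‖ = (1 - ε) * (‖z‖⁻¹ * ‖T z‖) * ‖z‖ := by
              field_simp
        _ ≤ (1 + ε) * ‖T x‖ * ‖z‖ := this
      calc (1 - ε) * ‖T z‖ ≤ (1 + ε) * ‖T x‖ * ‖z‖ := h3
      _ ≤ 4 * ‖T x‖ := by
          nlinarith [mul_le_mul_of_nonneg_left hz2
              (mul_nonneg (by linarith : (0:ℝ) ≤ 1 + ε) (norm_nonneg (T x))),
            mul_nonneg hε0 (norm_nonneg (T x)),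
            mul_le_mul_of_nonneg_right hε1 (norm_nonneg (T x))]
  -- combine
  have : (1 - ε) * c ≤ 5 * ‖T x‖ := by nlinarith [norm_nonneg (T x), norm_nonneg (T z)]
  have : (1 - ε) * c < 5 * δ := by nlinarith
  rw [hδdef] at this
  linarith
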